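/- Let r > 0, v ∈ ℝ² \ {0}, and θ ∈ (0, π/2). For every ε > 0 with ε(1 + 1/sin θ) ≤ r, the Lebesgue measure of the ε-boundary of the vision cone satisfies Leb(∂^ε C(r,v,θ)) ≤ 4 r ε θ (1 + 1/sin θ). -/

import Mathlib

open MeasureTheory Metric Set Pointwise
noncomputable section

set_option maxHeartbeats 1000000

lemma vol_sector {r θ : ℝ} (hr : 0 < r) (hθ0 : 0 < θ) (hθ : θ < Real.pi) :
    volume {w : ℂ | ‖w‖ ≤ r ∧ ‖w‖ * Real.cos θ ≤ w.re} = ENNReal.ofReal (r^2*θ) := by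
  set S : Set ℂ := {w : ℂ | ‖w‖ ≤ r ∧ ‖w‖ * Real.cos θ ≤ w.re} with hS
  have hSm : MeasurableSet S := by
    apply IsClosed.measurableSet
    exact (isClosed_le continuous_norm continuous_const).inter
      (isClosed_le (continuous_norm.mul continuous_const) Complex.continuous_re)
  have hsub : S ⊆ closedBall 0 r := fun w hw => by
    simpa [mem_closedBall, dist_zero_right] using hw.1
  have hfin : volume S ≠ ⊤ :=
    ((measure_mono hsub).trans_lt (measure_closedBall_lt_top)).ne
  have hboxm : MeasurableSet (Ioc (0:ℝ) r ×ˢ Icc (-θ) θ) :=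
    measurableSet_Ioc.prod measurableSet_Icc
  have hbox : (Ioc (0:ℝ) r ×ˢ Icc (-θ) θ) ⊆ polarCoord.target := by
    rw [polarCoord_target]
    rintro p ⟨h1, h2⟩
    exact ⟨h1.1, lt_of_lt_of_le (by linarith) h2.1, lt_of_le_of_lt h2.2 hθ⟩
  have hcosiff : ∀ φ : ℝ, φ ∈ Ioo (-Real.pi) Real.pi →
      (Real.cos θ ≤ Real.cos φ ↔ |φ| ≤ θ) := by
    intro φ hφ
    rw [← Real.cos_abs φ]
    constructor
    · intro h
      by_contra hc
      push_neg at hc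
      have habsle : |φ| ≤ Real.pi := by
        rw [abs_le]; exact ⟨hφ.1.le, hφ.2.le⟩
      exact absurd h (not_le.mpr (Real.cos_lt_cos_of_nonneg_of_le_pi hθ0.le habsle hc))
    · intro h
      exact Real.cos_le_cos_of_nonneg_of_le_pi (abs_nonneg φ) hθ.le h
  have key : ∫ w, S.indicator (fun _ => (1:ℝ)) w = r^2 * θ := by
    rw [← Complex.integral_comp_polarCoord_symm (S.indicator fun _ => (1:ℝ))]
    have hcongr : EqOn (fun p : ℝ × ℝ => p.1 • S.indicator (fun _ => (1:ℝ)) (Complex.polarCoord.symm p))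
        ((Ioc (0:ℝ) r ×ˢ Icc (-θ) θ).indicator (fun q : ℝ × ℝ => q.1)) polarCoord.target := by
      intro p hp
      rw [polarCoord_target] at hp
      obtain ⟨hp1, hp2⟩ := hp
      simp only [mem_Ioi] at hp1
      have habs : ‖Complex.polarCoord.symm p‖ = p.1 := by
        rw [Complex.norm_polarCoord_symm, abs_of_pos hp1]
      have hre : (Complex.polarCoord.symm p).re = p.1 * Real.cos p.2 := by
        simp [Complex.polarCoord_symm_apply, Complex.cos_ofReal_re]
      have hmem : Complex.polarCoord.symm p ∈ S ↔ p ∈ Ioc (0:ℝ) r ×ˢ Icc (-θ) θ := by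
        rw [hS, mem_setOf_eq, habs, hre, Set.mem_prod, mem_Ioc, mem_Icc, ← abs_le,
          ← hcosiff p.2 hp2]
        constructor
        · rintro ⟨h1, h2⟩
          exact ⟨⟨hp1, h1⟩, le_of_mul_le_mul_left h2 hp1⟩
        · rintro ⟨⟨_, h1⟩, h2⟩
          exact ⟨h1, by nlinarith⟩
      by_cases hmem' : Complex.polarCoord.symm p ∈ S
      · simp only [Set.indicator_of_mem hmem', Set.indicator_of_mem (hmem.mp hmem')]
        simp
      · simp only [Set.indicator_of_notMem hmem',
          Set.indicator_of_notMem (fun hc => hmem' (hmem.mpr hc))]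
        simp
    rw [setIntegral_congr_fun polarCoord.open_target.measurableSet hcongr,
      setIntegral_indicator hboxm, inter_eq_self_of_subset_right hbox,
      Measure.volume_eq_prod]
    have : ∀ q : ℝ × ℝ, q.1 = q.1 * (fun _ : ℝ => (1:ℝ)) q.2 := fun q => by simp
    rw [show (fun q : ℝ × ℝ => q.1) = (fun q : ℝ × ℝ => q.1 * (fun _ : ℝ => (1:ℝ)) q.2) by
      funext q; simp]
    rw [MeasureTheory.setIntegral_prod_mul (fun x : ℝ => x) (fun _ : ℝ => (1:ℝ))]
    have h1 : ∫ x in Ioc (0:ℝ) r, x = r^2/2 := by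
      rw [← intervalIntegral.integral_of_le hr.le, integral_id]
      ring
    have h2 : ∫ _ in Icc (-θ) θ, (1:ℝ) = 2*θ := by
      simp [Real.volume_Icc]
      rw [max_eq_left (by linarith)]
      ring
    rw [h1, h2]; ring
  have := integral_indicator_one hSm (μ := volume)
  rw [show (Set.indicator S 1 : ℂ → ℝ) = S.indicator (fun _ => (1:ℝ)) from rfl] at this
  rw [← ENNReal.ofReal_toReal hfin, ← measureReal_def, ← this, key]

/-- The vision cone `C(r,v,θ) := { x ∈ ℝ² : |x| ≤ r and x·v ≥ |x||v| cos θ }`. -/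
def visionCone (r : ℝ) (v : EuclideanSpace ℝ (Fin 2)) (θ : ℝ) :
    Set (EuclideanSpace ℝ (Fin 2)) :=
  {x | ‖x‖ ≤ r ∧ (inner ℝ x v : ℝ) ≥ ‖x‖ * ‖v‖ * Real.cos θ}

lemma visionCone_isClosed (r : ℝ) (v : EuclideanSpace ℝ (Fin 2)) (θ : ℝ) :
    IsClosed (visionCone r v θ) := by
  apply IsClosed.inter
  · exact isClosed_le continuous_norm continuous_const
  · exact isClosed_le ((continuous_norm.mul continuous_const).mul continuous_const)
      (continuous_id.inner continuous_const)

lemma vol_visionCone {r θ : ℝ} (hr : 0 < r) (hθ0 : 0 < θ) (hθ : θ < Real.pi)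
    (v : EuclideanSpace ℝ (Fin 2)) (hv : v ≠ 0) :
    volume (visionCone r v θ) = ENNReal.ofReal (r^2*θ) := by
  classical
  set b := Complex.orthonormalBasisOneI
  set c : ℂ := b.repr.symm v with hc
  have hc0 : c ≠ 0 := by
    simp [hc, hv]
  have hnc : ‖c‖ = ‖v‖ := by
    rw [hc, LinearIsometryEquiv.norm_map]
  have hu : ((↑‖c‖)⁻¹ * c : ℂ) ∈ Submonoid.unitSphere ℂ :=
    mem_sphere_zero_iff_norm.mpr (by
      rw [norm_mul, norm_inv, Complex.norm_real, Real.norm_eq_abs,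
        abs_of_nonneg (norm_nonneg c), inv_mul_cancel₀ (norm_ne_zero_iff.mpr hc0)])
  set u : Circle := ⟨_, hu⟩ with hudef
  set φ : ℂ ≃ₗᵢ[ℝ] EuclideanSpace ℝ (Fin 2) := (rotation u).trans b.repr with hφ
  have hne : ((‖c‖ : ℂ)) ≠ 0 := by
    simpa using norm_ne_zero_iff.mpr hc0
  have h1 : (u : ℂ) * (‖v‖ : ℂ) = c := by
    show ((↑‖c‖)⁻¹ * c : ℂ) * (‖v‖ : ℂ) = c
    rw [← hnc, mul_comm ((‖c‖ : ℂ))⁻¹ c, mul_assoc, inv_mul_cancel₀ hne, mul_one]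
  have hφv : φ ((‖v‖ : ℝ) : ℂ) = v := by
    rw [hφ]
    simp only [LinearIsometryEquiv.trans_apply, rotation_apply, h1, hc]
    simp
  have hφsymm : φ.symm v = ((‖v‖ : ℝ) : ℂ) := by
    have h2 := φ.symm_apply_apply ((‖v‖ : ℝ) : ℂ)
    rw [hφv] at h2
    exact h2
  have hinner1 : ∀ w : ℂ, (inner ℝ w ((‖v‖ : ℝ) : ℂ) : ℝ) = ‖v‖ * w.re := by
    intro w
    have hw1 : (inner ℝ w (1 : ℂ) : ℝ) = w.re := by
      have h2 := Complex.orthonormalBasisOneI.repr_apply_apply w 0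
      rw [Complex.orthonormalBasisOneI_repr_apply] at h2
      simp only [Matrix.cons_val_zero] at h2
      rw [real_inner_comm]
      rw [show Complex.orthonormalBasisOneI 0 = 1 by
        simp [Complex.coe_orthonormalBasisOneI]] at h2
      exact h2.symm
    have hsm : ((‖v‖ : ℝ) : ℂ) = (‖v‖ : ℝ) • (1 : ℂ) := by simp [Complex.real_smul]
    calc (inner ℝ w ((‖v‖ : ℝ) : ℂ) : ℝ) = (inner ℝ w ((‖v‖ : ℝ) • (1 : ℂ)) : ℝ) := by
          rw [← hsm]
      _ = ‖v‖ * (inner ℝ w (1 : ℂ) : ℝ) := real_inner_smul_right _ _ _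
      _ = ‖v‖ * w.re := by rw [hw1]
  have hpre : φ ⁻¹' (visionCone r v θ) = {w : ℂ | ‖w‖ ≤ r ∧ ‖w‖ * Real.cos θ ≤ w.re} := by
    ext w
    simp only [mem_preimage, visionCone, mem_setOf_eq, LinearIsometryEquiv.norm_map]
    have h3 : (inner ℝ (φ w) v : ℝ) = ‖v‖ * w.re := by
      have h4 := φ.inner_map_map w (φ.symm v)
      rw [φ.apply_symm_apply, hφsymm] at h4
      rw [h4, hinner1]
    rw [h3]
    have hvn : (0:ℝ) < ‖v‖ := norm_pos_iff.mpr hv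
    constructor
    · rintro ⟨hle, hin⟩
      refine ⟨hle, ?_⟩
      nlinarith
    · rintro ⟨hle, hin⟩
      refine ⟨hle, ?_⟩
      show ‖w‖ * ‖v‖ * Real.cos θ ≤ ‖v‖ * w.re
      nlinarith
  have hmp := (LinearIsometryEquiv.measurePreserving φ).measure_preimage
    (s := visionCone r v θ) ((visionCone_isClosed r v θ).measurableSet.nullMeasurableSet)
  rw [hpre] at hmp
  rw [← hmp, vol_sector hr hθ0 hθ]

lemma visionCone_convex {r θ : ℝ} (hc : 0 ≤ Real.cos θ) (v : EuclideanSpace ℝ (Fin 2)) :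
    Convex ℝ (visionCone r v θ) := by
  intro x hx y hy a b ha hb hab
  obtain ⟨hx1, hx2⟩ := hx
  obtain ⟨hy1, hy2⟩ := hy
  have hna : ‖a • x + b • y‖ ≤ a * ‖x‖ + b * ‖y‖ := by
    refine (norm_add_le _ _).trans ?_
    rw [norm_smul, norm_smul, Real.norm_eq_abs, Real.norm_eq_abs, abs_of_nonneg ha,
      abs_of_nonneg hb]
  constructor
  · have : a * ‖x‖ + b * ‖y‖ ≤ r := by
      have habr : a * r + b * r = r := by rw [← add_mul, hab, one_mul]
      linarith [mul_le_mul_of_nonneg_left hx1 ha, mul_le_mul_of_nonneg_left hy1 hb]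
    exact hna.trans this
  · have hinner : (inner ℝ (a • x + b • y) v : ℝ) = a * (inner ℝ x v : ℝ) + b * (inner ℝ y v : ℝ) := by
      rw [inner_add_left, real_inner_smul_left, real_inner_smul_left]
    show (inner ℝ (a • x + b • y) v : ℝ) ≥ ‖a • x + b • y‖ * ‖v‖ * Real.cos θ
    rw [hinner]
    have h5 : ‖a • x + b • y‖ * (‖v‖ * Real.cos θ) ≤ (a * ‖x‖ + b * ‖y‖) * (‖v‖ * Real.cos θ) :=
      mul_le_mul_of_nonneg_right hna (by positivity)
    nlinarith [mul_le_mul_of_nonneg_left hx2 ha, mul_le_mul_of_nonneg_left hy2 hb]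

lemma visionCone_ball_subset {r θ : ℝ} (hr : 0 < r) (hθ : θ ∈ Set.Ioo (0:ℝ) (Real.pi/2))
    (v : EuclideanSpace ℝ (Fin 2)) (hv : v ≠ 0) :
    closedBall ((r / (1 + Real.sin θ)) • (‖v‖⁻¹ • v)) (r * Real.sin θ / (1 + Real.sin θ)) ⊆
      visionCone r v θ := by
  set s := Real.sin θ with hsdef
  set co := Real.cos θ with hco
  have hs : 0 < s := Real.sin_pos_of_pos_of_lt_pi hθ.1 (by linarith [Real.pi_pos, hθ.2])
  have hcpos : 0 < co := Real.cos_pos_of_mem_Ioo ⟨by linarith [Real.pi_pos, hθ.1], hθ.2⟩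
  have hpyth : s^2 + co^2 = 1 := by rw [hsdef, hco]; exact Real.sin_sq_add_cos_sq θ
  set vn : EuclideanSpace ℝ (Fin 2) := ‖v‖⁻¹ • v with hvn
  have hvpos : (0:ℝ) < ‖v‖ := norm_pos_iff.mpr hv
  have hvn1 : ‖vn‖ = 1 := norm_smul_inv_norm hv
  set d := r / (1 + s) with hd
  set ρ := r * s / (1 + s) with hρ
  have hdpos : 0 < d := by positivity
  have hρpos : 0 < ρ := by positivity
  have hdρ : d + ρ = r := by rw [hd, hρ]; field_simp
  have hds : d * s = ρ := by rw [hd, hρ]; ring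
  intro x hx
  rw [mem_closedBall, dist_eq_norm] at hx
  set t : ℝ := inner ℝ x vn with ht
  have hvv : (inner ℝ vn vn : ℝ) = 1 := by
    rw [real_inner_self_eq_norm_sq, hvn1]; norm_num
  set w : EuclideanSpace ℝ (Fin 2) := x - t • vn with hw
  have hwv : (inner ℝ w vn : ℝ) = 0 := by
    rw [hw, inner_sub_left, real_inner_smul_left, hvv, ht]; ring
  have hxw : x = t • vn + w := by rw [hw]; abel
  have hnx2 : ‖x‖^2 = t^2 + ‖w‖^2 := by
    rw [hxw, norm_add_sq_real, real_inner_smul_left, real_inner_comm, hwv,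
      norm_smul, Real.norm_eq_abs, mul_pow, sq_abs, hvn1]
    ring
  have hxz : x - d • vn = (t - d) • vn + w := by
    rw [hxw, sub_smul]; abel
  have hnxz2 : ‖x - d • vn‖^2 = (t - d)^2 + ‖w‖^2 := by
    rw [hxz, norm_add_sq_real, real_inner_smul_left, real_inner_comm, hwv,
      norm_smul, Real.norm_eq_abs, mul_pow, sq_abs, hvn1]
    ring
  have htd : (t - d)^2 + ‖w‖^2 ≤ ρ^2 := by
    rw [← hnxz2]
    have := norm_nonneg (x - d • vn)
    nlinarith
  have hs1 : s < 1 := by nlinarith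
  have hρd : ρ < d := by rw [← hds]; nlinarith
  have hρds : ρ^2 = d^2 * s^2 := by rw [← hds]; ring
  have ht0 : 0 < t := by nlinarith [sq_nonneg ‖w‖, htd, hρd, hρpos, mul_pos hρpos hρpos]
  have hxr : ‖x‖ ≤ r := by
    calc ‖x‖ = ‖(x - d • vn) + d • vn‖ := by congr 1; abel
      _ ≤ ‖x - d • vn‖ + ‖d • vn‖ := norm_add_le _ _
      _ ≤ ρ + d := by
          rw [norm_smul, Real.norm_eq_abs, abs_of_pos hdpos, hvn1, mul_one]
          linarith
      _ = r := by linarith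
  have hρds2 : ρ^2 = d^2 - d^2*co^2 := by
    rw [← hds]; linear_combination d^2 * hpyth
  have htd2 : (t - d)^2 + ‖w‖^2 ≤ d^2 - d^2*co^2 := by linarith [htd, hρds2]
  have hkey : co^2 * ‖x‖^2 ≤ t^2 := by
    rw [hnx2]
    nlinarith [htd2, sq_nonneg (t - co^2 * d), sq_nonneg co]
  have htcn : ‖x‖ * co ≤ t := by
    nlinarith [hkey, ht0.le, mul_nonneg (norm_nonneg x) hcpos.le]
  refine ⟨hxr, ?_⟩
  have hxv : (inner ℝ x v : ℝ) = ‖v‖ * t := by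
    have hvsm : v = ‖v‖ • vn := by
      rw [hvn, smul_smul, mul_inv_cancel₀ hvpos.ne', one_smul]
    conv_lhs => rw [hvsm]
    rw [real_inner_smul_right, ht]
  show (inner ℝ x v : ℝ) ≥ ‖x‖ * ‖v‖ * co
  rw [hxv]
  nlinarith [mul_le_mul_of_nonneg_left htcn hvpos.le]
/-- For `r > 0`, `v ≠ 0`, `θ ∈ (0, π/2)` and every `ε > 0` with
`ε(1 + 1/sin θ) ≤ r`, the measure of the `ε`-boundary of the vision cone satisfies
`Leb(∂^ε C(r,v,θ)) ≤ 4 r ε θ (1 + 1/sin θ)`. -/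
theorem stmt17 (r : ℝ) (hr : 0 < r) (v : EuclideanSpace ℝ (Fin 2)) (hv : v ≠ 0)
    (θ : ℝ) (hθ : θ ∈ Set.Ioo (0:ℝ) (Real.pi / 2))
    (ε : ℝ) (hε : 0 < ε) (hεr : ε * (1 + 1 / Real.sin θ) ≤ r) :
    volume (frontier (visionCone r v θ) + closedBall (0 : EuclideanSpace ℝ (Fin 2)) ε) ≤
      ENNReal.ofReal (4 * r * ε * θ * (1 + 1 / Real.sin θ)) := by
  obtain ⟨hθ0, hθ2⟩ := hθ
  have hpi := Real.pi_pos
  set s := Real.sin θ with hsdef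
  have hs : 0 < s := Real.sin_pos_of_pos_of_lt_pi hθ0 (by linarith)
  have hcopos : 0 < Real.cos θ := Real.cos_pos_of_mem_Ioo ⟨by linarith, hθ2⟩
  have hvpos : (0:ℝ) < ‖v‖ := norm_pos_iff.mpr hv
  set K := visionCone r v θ with hK
  have hKclosed := visionCone_isClosed r v θ
  have hKconv : Convex ℝ K := visionCone_convex hcopos.le v
  set vn : EuclideanSpace ℝ (Fin 2) := ‖v‖⁻¹ • v with hvndef
  set d : ℝ := r / (1+s) with hd
  set ρ : ℝ := r * s / (1+s) with hρ
  set z : EuclideanSpace ℝ (Fin 2) := d • vn with hz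
  have hρpos : 0 < ρ := by positivity
  have hball : closedBall z ρ ⊆ K := visionCone_ball_subset hr ⟨hθ0, hθ2⟩ v hv
  have hzK : z ∈ K := hball (mem_closedBall_self hρpos.le)
  set α : ℝ := ε / ρ with hα
  have hα0 : 0 < α := by positivity
  have hαρ : α * ρ = ε := by rw [hα]; field_simp
  have hα1 : α ≤ 1 := by
    rw [hα, div_le_one hρpos, hρ, le_div_iff₀ (by positivity)]
    have h7 : ε * (1 + s) = ε * (1 + 1/s) * s := by rw [mul_assoc, add_mul, one_mul, one_div, inv_mul_cancel₀ hs.ne', add_comm s 1]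
    rw [h7]
    nlinarith
  have hμK : volume K = ENNReal.ofReal (r^2*θ) :=
    vol_visionCone hr hθ0 (by linarith) v hv
  have hKfin : volume K ≠ ⊤ := by rw [hμK]; exact ENNReal.ofReal_ne_top
  have hne1 : (1:ℝ) + α ≠ 0 := by positivity
  have hfrK : frontier K ⊆ K := hKclosed.frontier_subset
  -- outer containment
  have hout : K + closedBall 0 ε ⊆ AffineMap.homothety z (1+α) '' K := by
    rintro x hx
    rw [Set.mem_add] at hx
    obtain ⟨y, hy, e, he, rfl⟩ := hx
    rw [mem_closedBall_zero_iff] at he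
    set k := ((1+α)⁻¹) • y + (α * (1+α)⁻¹) • (z + α⁻¹ • e) with hkdef
    have hk2 : z + α⁻¹ • e ∈ closedBall z ρ := by
      rw [mem_closedBall, dist_eq_norm, add_sub_cancel_left, norm_smul, Real.norm_eq_abs,
        abs_of_pos (inv_pos.mpr hα0)]
      rw [← hαρ] at he
      calc α⁻¹ * ‖e‖ ≤ α⁻¹ * (α * ρ) := by
            exact mul_le_mul_of_nonneg_left he (inv_pos.mpr hα0).le
        _ = ρ := by field_simp
    have hkK : k ∈ K := hKconv hy (hball hk2) (by positivity) (by positivity)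
      (by field_simp)
    refine ⟨k, hkK, ?_⟩
    simp only [AffineMap.homothety_apply, vsub_eq_sub, vadd_eq_add, hkdef]
    match_scalars <;> field_simp <;> ring
  -- measure of homothety images
  have himg : ∀ (c : ℝ) (U : Set (EuclideanSpace ℝ (Fin 2))),
      volume (AffineMap.homothety z c '' U) = ENNReal.ofReal (c^2) * volume U := by
    intro c U
    have h8 := MeasureTheory.Measure.addHaar_image_homothety (μ := volume) z c U
    rw [finrank_euclideanSpace_fin] at h8
    rw [h8, abs_of_nonneg (sq_nonneg c)]
  have hsub1 : frontier K + closedBall (0 : EuclideanSpace ℝ (Fin 2)) ε ⊆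
      K + closedBall 0 ε := by
    rintro x hx
    rw [Set.mem_add] at hx ⊢
    obtain ⟨y, hy, e, he, rfl⟩ := hx
    exact ⟨y, hfrK hy, e, he, rfl⟩
  have htgt : 4 * r * ε * θ * (1 + 1 / s) = 4 * α * (r^2 * θ) := by
    rw [hα, hρ]; field_simp; ring
  rcases eq_or_lt_of_le hα1 with hαeq | hαlt
  · -- α = 1
    calc volume (frontier K + closedBall (0 : EuclideanSpace ℝ (Fin 2)) ε)
        ≤ volume (AffineMap.homothety z (1+α) '' K) :=
          measure_mono (hsub1.trans hout)
      _ = ENNReal.ofReal ((1+α)^2) * volume K := himg _ _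
      _ = ENNReal.ofReal (4 * α * (r^2*θ)) := by
          rw [hμK, ← ENNReal.ofReal_mul (by positivity), hαeq]
          norm_num
      _ = ENNReal.ofReal (4 * r * ε * θ * (1 + 1 / s)) := by rw [htgt]
  · -- α < 1
    have h1α : (0:ℝ) < 1 - α := by linarith
    set A := AffineMap.homothety z (1+α) '' K with hA
    set B := AffineMap.homothety z (1-α) '' (interior K) with hB
    have hBopen : IsOpen B :=
      AffineMap.homothety_isOpenMap z (1-α) h1α.ne' (interior K) isOpen_interior
    have hBA : B ⊆ A := by
      rintro x ⟨k, hk, rfl⟩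
      have hkK : k ∈ K := interior_subset hk
      set m : ℝ := (1-α) / (1+α) with hm
      have hm0 : 0 ≤ m := by positivity
      have hm1 : m ≤ 1 := by rw [hm, div_le_one (by positivity)]; linarith
      refine ⟨(1 - m) • z + m • k, hKconv hzK hkK (by linarith) hm0 (by ring), ?_⟩
      simp only [AffineMap.homothety_apply, vsub_eq_sub, vadd_eq_add, hm]
      match_scalars <;> field_simp <;> ring
    have hBfin : volume B ≠ ⊤ := by
      refine (lt_of_le_of_lt (measure_mono hBA) ?_).ne
      rw [hA, himg]
      exact ENNReal.mul_lt_top ENNReal.ofReal_lt_top hKfin.lt_top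
    -- exclusion
    have hexcl : ∀ y ∈ frontier K, ∀ e : EuclideanSpace ℝ (Fin 2), ‖e‖ ≤ ε → y + e ∉ B := by
      rintro y hy e he ⟨k, hkint, hkeq⟩
      obtain ⟨η, hη0, hηball⟩ : ∃ η > 0, closedBall k η ⊆ K := by
        obtain ⟨η, hη0, hb⟩ := Metric.isOpen_iff.mp isOpen_interior k hkint
        exact ⟨η/2, by linarith, (closedBall_subset_ball (by linarith)).trans
          (hb.trans interior_subset)⟩
      set D : ℝ := α * ρ + (1-α) * η with hD
      have hDpos : 0 < D := by positivity
      have hDe : D = ε + (1-α) * η := by rw [hD, hαρ]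
      have hcb : closedBall (y+e) D ⊆ K := by
        intro p hp
        rw [mem_closedBall, dist_eq_norm] at hp
        set e' := p - (y+e) with he'
        have he'n : ‖e'‖ ≤ D := hp
        set a := (ρ/D) • e' with ha
        set bb := (η/D) • e' with hbb
        have hza : z + a ∈ closedBall z ρ := by
          rw [mem_closedBall, dist_eq_norm, add_sub_cancel_left, ha, norm_smul,
            Real.norm_eq_abs, abs_of_pos (by positivity)]
          calc ρ/D * ‖e'‖ ≤ ρ/D * D := mul_le_mul_of_nonneg_left he'n (by positivity)
            _ = ρ := by field_simp
        have hkb : k + bb ∈ closedBall k η := by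
          rw [mem_closedBall, dist_eq_norm, add_sub_cancel_left, hbb, norm_smul,
            Real.norm_eq_abs, abs_of_pos (by positivity)]
          calc η/D * ‖e'‖ ≤ η/D * D := mul_le_mul_of_nonneg_left he'n (by positivity)
            _ = η := by field_simp
        have hpeq : p = α • (z + a) + (1-α) • (k + bb) := by
          have hyek : y + e = (1-α) • (k - z) + z := by
            rw [← hkeq]; simp [AffineMap.homothety_apply, vsub_eq_sub, vadd_eq_add]
          have hpe : p = (y + e) + e' := by rw [he']; abel
          rw [hpe, hyek, ha, hbb, hD]
          match_scalars <;> field_simp <;> ring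
        rw [hpeq]
        exact hKconv (hball hza) (hηball hkb) hα0.le h1α.le (by ring)
      have hyint : y ∈ interior K := by
        rw [mem_interior_iff_mem_nhds]
        refine Filter.mem_of_superset (closedBall_mem_nhds y (show 0 < (1-α)*η by positivity)) ?_
        intro q hq
        rw [mem_closedBall, dist_eq_norm] at hq
        refine hcb ?_
        rw [mem_closedBall, dist_eq_norm]
        calc ‖q - (y+e)‖ = ‖(q - y) + (-e)‖ := by congr 1; abel
          _ ≤ ‖q - y‖ + ‖e‖ := by rw [← norm_neg e]; exact norm_add_le _ _
          _ ≤ D := by rw [hDe]; linarith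
      rw [hKclosed.frontier_eq] at hy
      exact hy.2 hyint
    have hcont : frontier K + closedBall (0 : EuclideanSpace ℝ (Fin 2)) ε ⊆ A \ B := by
      intro x hx
      refine ⟨hout (hsub1 hx), ?_⟩
      rw [Set.mem_add] at hx
      obtain ⟨y, hy, e, he, rfl⟩ := hx
      exact hexcl y hy e (mem_closedBall_zero_iff.mp he)
    have hIntK : volume (interior K) = volume K := by
      apply le_antisymm (measure_mono interior_subset)
      have h9 : volume K ≤ volume (interior K) + volume (frontier K) := by
        calc volume K ≤ volume (interior K ∪ frontier K) := measure_mono (by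
              rw [← closure_eq_interior_union_frontier]; exact subset_closure)
          _ ≤ _ := measure_union_le _ _
      rwa [hKconv.addHaar_frontier volume, add_zero] at h9
    calc volume (frontier K + closedBall (0 : EuclideanSpace ℝ (Fin 2)) ε)
        ≤ volume (A \ B) := measure_mono hcont
      _ = volume A - volume B :=
          measure_diff hBA hBopen.measurableSet.nullMeasurableSet hBfin
      _ = ENNReal.ofReal ((1+α)^2*(r^2*θ)) - ENNReal.ofReal ((1-α)^2*(r^2*θ)) := by
          rw [hA, hB, himg, himg, hIntK, hμK, ← ENNReal.ofReal_mul (by positivity),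
            ← ENNReal.ofReal_mul (by positivity)]
      _ ≤ ENNReal.ofReal (4*α*(r^2*θ)) := by
          have h10 : (1+α)^2*(r^2*θ) - (1-α)^2*(r^2*θ) = 4*α*(r^2*θ) := by ring
          rw [← ENNReal.ofReal_sub _ (by positivity), h10]
      _ = ENNReal.ofReal (4 * r * ε * θ * (1 + 1/s)) := by rw [htgt]
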